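/- In an ordered field, if a subring Z is an integer part (every element of the field lies within distance 1 above some element of Z, i.e., for every x there is z ∈ Z with z ≤ x < z + 1), then the fraction field of Z, viewed inside the field, is dense: between any two distinct elements of the field there is a quotient a/b with a, b in Z and b ≠ 0. -/

import Mathlib

theorem stmt_1 {K : Type*} [Field K] [LinearOrder K] [IsStrictOrderedRing K] (Z : Subring K)
    (hIP : ∀ x : K, ∃ z ∈ Z, z ≤ x ∧ x < z + 1) :
    ∀ x y : K, x < y → ∃ a ∈ Z, ∃ b ∈ Z, 0 < b ∧ x < a / b ∧ a / b < y := by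
  intro x y hxy
  have hpos : (0:K) < (y - x)⁻¹ := inv_pos.2 (by linarith)
  obtain ⟨z, hz, hz1, hz2⟩ := hIP ((y - x)⁻¹)
  set b := z + 1 with hb
  have hbZ : b ∈ Z := Z.add_mem hz Z.one_mem
  have hbpos : 0 < b := lt_trans hpos hz2
  obtain ⟨w, hw, hw1, hw2⟩ := hIP (b * x)
  refine ⟨w + 1, Z.add_mem hw Z.one_mem, b, hbZ, hbpos, ?_, ?_⟩
  · rw [lt_div_iff₀ hbpos]; linarith [mul_comm b x]
  · rw [div_lt_iff₀ hbpos]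
    have hbgt : (y - x)⁻¹ < b := hz2
    have : 1 < b * (y - x) := by
      rw [← inv_lt_iff_one_lt_mul₀ (by linarith)] at *
      · linarith
    nlinarith
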